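/- Let X ⊆ ℝ^s be an open convex set, let C ⊆ ℝ^n be a closed convex cone with vertex at the origin and nonempty interior, and let f : X → ℝ^n be Fréchet differentiable on X and quasiconvex on X with respect to C. Then f is pseudoconvex on X with respect to C if and only if every vector critical point x ∈ X of f with respect to C is a weak global minimizer of f on X with respect to C. -/

import Mathlib

open Matrix Set

/-- The positive polar cone of a set `A ⊆ ℝ^d`. -/
def polarCone {d : ℕ} (A : Set (Fin d → ℝ)) : Set (Fin d → ℝ) :=
  {l | ∀ x ∈ A, 0 ≤ l ⬝ᵥ x}

lemma polar_pos {d : ℕ} {A : Set (Fin d → ℝ)} {l w : Fin d → ℝ}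
    (hl : l ∈ polarCone A) (hl0 : l ≠ 0) (hw : w ∈ interior A) : 0 < l ⬝ᵥ w := by
  obtain ⟨ε, hε, hball⟩ := Metric.mem_nhds_iff.mp (mem_interior_iff_mem_nhds.mp hw)
  set δ : ℝ := ε / (2 * (‖l‖ + 1)) with hδdef
  have hnorm : (0:ℝ) < ‖l‖ + 1 := by positivity
  have hδ : 0 < δ := by positivity
  have hw' : w - δ • l ∈ A := by
    apply hball
    rw [Metric.mem_ball, dist_eq_norm]
    have h1 : ‖w - δ • l - w‖ = δ * ‖l‖ := by
      rw [sub_sub_cancel_left, norm_neg, norm_smul, Real.norm_of_nonneg hδ.le]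
    rw [h1]
    calc δ * ‖l‖ ≤ δ * (‖l‖ + 1) := by nlinarith [norm_nonneg l]
    _ = ε / 2 := by rw [hδdef]; field_simp
    _ < ε := by linarith
  have hge := hl _ hw'
  have hnn : 0 ≤ l ⬝ᵥ l := Finset.sum_nonneg fun i _ => mul_self_nonneg _
  have hne : l ⬝ᵥ l ≠ 0 := fun h => hl0 (dotProduct_self_eq_zero.mp h)
  have hll : 0 < l ⬝ᵥ l := hnn.lt_of_ne (Ne.symm hne)
  have heq : l ⬝ᵥ (w - δ • l) = l ⬝ᵥ w - δ * (l ⬝ᵥ l) := by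
    simp [dotProduct_sub, dotProduct_smul]
  nlinarith [hge, heq]

lemma exists_rep {d : ℕ} (φ : (Fin d → ℝ) →L[ℝ] ℝ) :
    ∃ l : Fin d → ℝ, ∀ v, l ⬝ᵥ v = φ v := by
  refine ⟨fun i => φ (Pi.single i (1:ℝ)), fun v => ?_⟩
  have hv : ∑ i, Pi.single i (v i) = v := Finset.univ_sum_single v
  calc (fun i => φ (Pi.single i (1:ℝ))) ⬝ᵥ v
      = ∑ i, φ (Pi.single i (1:ℝ)) * v i := rfl
    _ = ∑ i, φ (Pi.single i (v i)) := by
        refine Finset.sum_congr rfl fun i _ => ?_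
        have h1 : Pi.single i (v i) = v i • (Pi.single i (1:ℝ) : Fin d → ℝ) := by
          rw [← Pi.single_smul, smul_eq_mul, mul_one]
        rw [h1, φ.map_smul, smul_eq_mul, mul_comm]
    _ = φ (∑ i, Pi.single i (v i)) := (map_sum φ _ _).symm
    _ = φ v := by rw [hv]

theorem stmt_8 {s n : ℕ} (X : Set (Fin s → ℝ)) (hXopen : IsOpen X) (hXconvex : Convex ℝ X)
    (C : Set (Fin n → ℝ))
    (hC0 : (0 : Fin n → ℝ) ∈ C)
    (hCcone : ∀ t : ℝ, 0 < t → ∀ y ∈ C, t • y ∈ C)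
    (hCclosed : IsClosed C) (hCconvex : Convex ℝ C)
    (hCint : (interior C).Nonempty)
    (f : (Fin s → ℝ) → (Fin n → ℝ))
    (Jf : (Fin s → ℝ) → ((Fin s → ℝ) →L[ℝ] (Fin n → ℝ)))
    (hdiff : ∀ x ∈ X, HasFDerivAt f (Jf x) x)
    (hquasi : ∀ x ∈ X, ∀ y ∈ X, f x - f y ∈ interior C → -(Jf x (y - x)) ∈ C) :
    (∀ x ∈ X, ∀ y ∈ X, f x - f y ∈ interior C → -(Jf x (y - x)) ∈ interior C) ↔
      (∀ x ∈ X,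
        (∃ l ∈ polarCone C, l ≠ 0 ∧ ∀ v : Fin s → ℝ, l ⬝ᵥ Jf x v = 0) →
        ∀ y ∈ X, f x - f y ∉ interior C) := by
  constructor
  · rintro hpseudo x hx ⟨l, hlC, hl0, hlJ⟩ y hy hfy
    have hw := hpseudo x hx y hy hfy
    have hpos := polar_pos hlC hl0 hw
    rw [dotProduct_neg, hlJ] at hpos
    simp at hpos
  · intro hcrit x hx y hy hfy
    by_contra hzint
    have hzC : -(Jf x (y - x)) ∈ C := hquasi x hx y hy hfy
    set z := -(Jf x (y - x)) with hz
    obtain ⟨φ, hφ⟩ := geometric_hahn_banach_open_point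
      (hCconvex.interior) isOpen_interior hzint
    obtain ⟨a, ha⟩ := hCint
    have hCle : ∀ c ∈ C, φ c ≤ φ z := by
      intro c hc
      by_contra hlt
      push_neg at hlt
      set d : ℝ := |φ c - φ a| with hddef
      have hd0 : 0 ≤ d := abs_nonneg _
      have hpos2 : (0:ℝ) < 2 * (d + 1) := by positivity
      set t : ℝ := min (1/2 : ℝ) ((φ c - φ z) / (2 * (d + 1))) with htdef
      have ht0 : 0 < t := lt_min (by norm_num) (div_pos (by linarith) hpos2)
      have ht1 : t < 1 := lt_of_le_of_lt (min_le_left _ _) (by norm_num)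
      have hmem := hCconvex.combo_self_interior_mem_interior hc ha
        (a := 1 - t) (b := t) (by linarith) ht0 (by ring)
      have hval := hφ _ hmem
      rw [map_add, φ.map_smul, φ.map_smul] at hval
      simp only [smul_eq_mul] at hval
      have h3 : t * (2 * (d + 1)) ≤ φ c - φ z := by
        have := min_le_right (1/2 : ℝ) ((φ c - φ z) / (2 * (d + 1)))
        calc t * (2 * (d + 1)) ≤ (φ c - φ z) / (2 * (d + 1)) * (2 * (d + 1)) := by
              apply mul_le_mul_of_nonneg_right _ hpos2.le
              exact this
        _ = φ c - φ z := by field_simp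
      nlinarith [le_abs_self (φ c - φ a), ht0.le]
    have hφz : φ z = 0 := by
      have h2 := hCle _ (hCcone 2 (by norm_num) z hzC)
      have h12 := hCle _ (hCcone (1/2) (by norm_num) z hzC)
      rw [φ.map_smul] at h2 h12
      simp only [smul_eq_mul] at h2 h12
      linarith
    obtain ⟨l, hl⟩ := exists_rep (-φ)
    simp only [ContinuousLinearMap.neg_apply] at hl
    have hlC : l ∈ polarCone C := by
      intro c hc
      rw [hl]
      linarith [hCle c hc, hφz]
    have hl0 : l ≠ 0 := by
      have hlta := hφ a ha
      intro h
      rw [h] at hl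
      have h2 := hl a
      simp only [zero_dotProduct] at h2
      rw [hφz] at hlta
      linarith [h2.symm, neg_nonneg.mpr hlta.le]
    have hcont : ContinuousAt f y := (hdiff y hy).differentiableAt.continuousAt
    have hmemnh : {y' | y' ∈ X ∧ f x - f y' ∈ interior C} ∈ nhds y := by
      have h1 : (fun y' => f x - f y') ⁻¹' (interior C) ∈ nhds y :=
        (continuousAt_const.sub hcont).preimage_mem_nhds (isOpen_interior.mem_nhds hfy)
      exact Filter.inter_mem (hXopen.mem_nhds hy) h1
    obtain ⟨ε, hε, hball⟩ := Metric.mem_nhds_iff.mp hmemnh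
    have hlz : l ⬝ᵥ z = 0 := by rw [hl, hφz, neg_zero]
    have hsmall : ∀ u : Fin s → ℝ, ‖u‖ < ε → l ⬝ᵥ Jf x u ≤ 0 := by
      intro u hu
      have hyu : y + u ∈ X ∧ f x - f (y + u) ∈ interior C := by
        apply hball
        rw [Metric.mem_ball, dist_eq_norm]
        simpa using hu
      have hq := hquasi x hx (y + u) hyu.1 hyu.2
      have hlq := hlC _ hq
      have hsplit : Jf x (y + u - x) = Jf x (y - x) + Jf x u := by
        rw [← map_add]; congr 1; abel
      rw [hsplit] at hlq
      have heq2 : l ⬝ᵥ (-(Jf x (y - x) + Jf x u)) = l ⬝ᵥ z - l ⬝ᵥ Jf x u := by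
        rw [hz]
        simp [dotProduct_neg, dotProduct_add]; ring
      rw [heq2, hlz] at hlq
      linarith
    have hkey : ∀ v : Fin s → ℝ, l ⬝ᵥ Jf x v = 0 := by
      intro v
      set t : ℝ := ε / (2 * (‖v‖ + 1)) with htdef
      have hnv : (0:ℝ) < ‖v‖ + 1 := by positivity
      have ht : 0 < t := by positivity
      have htv : ‖t • v‖ < ε := by
        rw [norm_smul, Real.norm_of_nonneg ht.le]
        calc t * ‖v‖ ≤ t * (‖v‖ + 1) := by nlinarith [norm_nonneg v]
        _ = ε / 2 := by rw [htdef]; field_simp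
        _ < ε := by linarith
      have h1 := hsmall (t • v) htv
      have h2 := hsmall (t • (-v)) (by rw [smul_neg, norm_neg]; exact htv)
      rw [(Jf x).map_smul] at h1 h2
      simp only [dotProduct_smul, smul_eq_mul, map_neg,
        dotProduct_neg] at h1 h2
      nlinarith
    exact hcrit x hx ⟨l, hlC, hl0, hkey⟩ y hy hfy
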